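/- Combining the two bounds: for c > 0, p ∈ (0,1], a nonnegative sequence {A_i} with partial sums S_t = Σ_{i=0}^t A_i, one has Σ_{i=0}^t A_i/(c + S_i) ≤ (c + S_t)^p / (p c^p) − 1. -/

import Mathlib

lemma adagrad_key {p x y : ℝ} (hp : 0 < p) (hy : 0 < y) (hxy : y ≤ x) :
    (x - y) / x ≤ (x ^ p - y ^ p) / (p * y ^ p) := by
  have hx : 0 < x := lt_of_lt_of_le hy hxy
  have h1 : Real.log (y / x) ≤ y / x - 1 := Real.log_le_sub_one_of_pos (by positivity)
  have hld : Real.log (y / x) = Real.log y - Real.log x := Real.log_div hy.ne' hx.ne'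
  have h2 : (x - y) / x ≤ Real.log x - Real.log y := by
    rw [hld] at h1
    have h6 : y / x - 1 = -((x - y) / x) := by field_simp; ring
    linarith [h6 ▸ h1]
  have hyp : (0:ℝ) < y ^ p := Real.rpow_pos_of_pos hy p
  have hxp : (0:ℝ) < x ^ p := Real.rpow_pos_of_pos hx p
  have h3 : Real.log (x ^ p / y ^ p) ≤ x ^ p / y ^ p - 1 :=
    Real.log_le_sub_one_of_pos (by positivity)
  have h4 : Real.log (x ^ p / y ^ p) = p * (Real.log x - Real.log y) := by
    rw [Real.log_div hxp.ne' hyp.ne', Real.log_rpow hx, Real.log_rpow hy]; ring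
  have h5 : p * ((x - y) / x) ≤ (x ^ p - y ^ p) / y ^ p := by
    rw [h4] at h3
    have h6 : x ^ p / y ^ p - 1 = (x ^ p - y ^ p) / y ^ p := by field_simp
    nlinarith [h2]
  rw [div_le_div_iff₀ hx (by positivity)]
  have h6 : p * (x - y) * y ^ p ≤ (x ^ p - y ^ p) * x := by
    have e1 : p * ((x - y) / x) * (x * y ^ p) = p * (x - y) * y ^ p := by
      field_simp
    have e2 : (x ^ p - y ^ p) / y ^ p * (x * y ^ p) = (x ^ p - y ^ p) * x := by
      field_simp
    rw [← e1, ← e2]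
    exact mul_le_mul_of_nonneg_right h5 (mul_pos hx hyp).le
  linarith [h6]

theorem adagrad_rpow_sum_bound (c p : ℝ) (hc : 0 < c) (hp0 : 0 < p) (hp1 : p ≤ 1)
    (A : ℕ → ℝ) (hA : ∀ i, 0 ≤ A i)
    (S : ℕ → ℝ) (hS : ∀ t, S t = ∑ i ∈ Finset.range (t + 1), A i) :
    ∀ t, ∑ i ∈ Finset.range (t + 1), A i / (c + S i)
      ≤ (c + S t) ^ p / (p * c ^ p) - 1 := by
  have hSnn : ∀ t, 0 ≤ S t := by
    intro t; rw [hS t]; exact Finset.sum_nonneg fun i _ => hA i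
  have hSsucc : ∀ t, S (t + 1) = S t + A (t + 1) := by
    intro t; rw [hS, hS, Finset.sum_range_succ]
  have hcp : (0:ℝ) < c ^ p := Real.rpow_pos_of_pos hc p
  have key : ∀ t, ∑ i ∈ Finset.range (t + 1), A i / (c + S i)
      ≤ ((c + S t) ^ p - c ^ p) / (p * c ^ p) := by
    intro t
    induction t with
    | zero =>
      rw [Finset.sum_range_one]
      have hS0 : S 0 = A 0 := by rw [hS 0, Finset.sum_range_one]
      have hk := adagrad_key (x := c + S 0) (y := c) hp0 hc (by linarith [hSnn 0])
      have : c + S 0 - c = A 0 := by rw [hS0]; ring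
      rwa [this] at hk
    | succ n ih =>
      rw [Finset.sum_range_succ]
      have hy : 0 < c + S n := by linarith [hSnn n]
      have hxy : c + S n ≤ c + S (n + 1) := by
        rw [hSsucc n]; linarith [hA (n + 1)]
      have hk := adagrad_key (x := c + S (n + 1)) (y := c + S n) hp0 hy hxy
      have hAn : c + S (n + 1) - (c + S n) = A (n + 1) := by rw [hSsucc n]; ring
      rw [hAn] at hk
      have hmono : c ^ p ≤ (c + S n) ^ p :=
        Real.rpow_le_rpow hc.le (by linarith [hSnn n]) hp0.le
      have hnum : 0 ≤ (c + S (n + 1)) ^ p - (c + S n) ^ p := by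
        have := Real.rpow_le_rpow hy.le hxy hp0.le
        linarith
      have hstep : A (n + 1) / (c + S (n + 1))
          ≤ ((c + S (n + 1)) ^ p - (c + S n) ^ p) / (p * c ^ p) := by
        refine hk.trans ?_
        apply div_le_div_of_nonneg_left hnum (by positivity)
        have : 0 < (c + S n) ^ p := Real.rpow_pos_of_pos hy p
        nlinarith
      calc _ ≤ ((c + S n) ^ p - c ^ p) / (p * c ^ p)
              + ((c + S (n + 1)) ^ p - (c + S n) ^ p) / (p * c ^ p) :=
          add_le_add ih hstep
        _ = ((c + S (n + 1)) ^ p - c ^ p) / (p * c ^ p) := by ring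
  intro t
  refine (key t).trans ?_
  have h1 : (1:ℝ) ≤ 1 / p := by rw [le_div_iff₀ hp0]; linarith
  have : ((c + S t) ^ p - c ^ p) / (p * c ^ p)
      = (c + S t) ^ p / (p * c ^ p) - 1 / p := by field_simp
  rw [this]
  linarith
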